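/- Let L be a finite lattice that contains no sublattice isomorphic to the pentagon N₅, no sublattice isomorphic to the diamond M₃, and no sublattice isomorphic to the Boolean lattice B₃. Then L is a distributive lattice that embeds (as a lattice) into ℕ × ℕ with the componentwise order. -/

import Mathlib

section ModularAux
variable {α : Type*} [Lattice α] [IsModularLattice α]

lemma med_sup' (x y z : α) :
    x ⊓ (y ⊔ z) ⊔ y ⊓ (z ⊔ x) = (x ⊔ y) ⊓ (y ⊔ z) ⊓ (z ⊔ x) := by
  have h1 : x ⊓ (y ⊔ z) ⊔ y ⊓ (z ⊔ x) = (x ⊓ (y ⊔ z) ⊔ y) ⊓ (z ⊔ x) :=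
    (sup_inf_assoc_of_le y (inf_le_left.trans le_sup_right)).symm
  have h2 : x ⊓ (y ⊔ z) ⊔ y = (x ⊔ y) ⊓ (y ⊔ z) := by
    rw [sup_comm, ← sup_inf_assoc_of_le x (le_sup_left : y ≤ y ⊔ z), sup_comm y x]
  rw [h1, h2]

lemma med_inf' (x y z : α) :
    (x ⊔ y ⊓ z) ⊓ (y ⊔ z ⊓ x) = x ⊓ y ⊔ y ⊓ z ⊔ z ⊓ x := by
  have h1 : (x ⊔ y ⊓ z) ⊓ (y ⊔ z ⊓ x) = (x ⊔ y ⊓ z) ⊓ y ⊔ z ⊓ x :=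
    (inf_sup_assoc_of_le y (inf_le_right.trans le_sup_left)).symm
  have h2 : (x ⊔ y ⊓ z) ⊓ y = x ⊓ y ⊔ y ⊓ z := by
    rw [inf_comm, ← inf_sup_assoc_of_le x (inf_le_left : y ⊓ z ≤ y), inf_comm y x]
  rw [h1, h2]

lemma m3_pair (x y z : α) :
    (x ⊓ (y ⊔ z) ⊔ y ⊓ z) ⊔ (y ⊓ (z ⊔ x) ⊔ z ⊓ x) = (x ⊔ y) ⊓ (y ⊔ z) ⊓ (z ⊔ x) ∧
    (x ⊓ (y ⊔ z) ⊔ y ⊓ z) ⊓ (y ⊓ (z ⊔ x) ⊔ z ⊓ x) = x ⊓ y ⊔ y ⊓ z ⊔ z ⊓ x := by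
  constructor
  · apply le_antisymm
    · apply sup_le <;> apply sup_le
      · exact le_inf (le_inf (inf_le_left.trans le_sup_left) inf_le_right)
          (inf_le_left.trans le_sup_right)
      · exact le_inf (le_inf (inf_le_left.trans le_sup_right)
          (inf_le_left.trans le_sup_left)) (inf_le_right.trans le_sup_left)
      · exact le_inf (le_inf (inf_le_left.trans le_sup_right)
          (inf_le_left.trans le_sup_left)) inf_le_right
      · exact le_inf (le_inf (inf_le_right.trans le_sup_left)
          (inf_le_left.trans le_sup_right)) (inf_le_left.trans le_sup_left)
    · rw [← med_sup']
      exact sup_le_sup le_sup_left le_sup_left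
  · apply le_antisymm
    · calc (x ⊓ (y ⊔ z) ⊔ y ⊓ z) ⊓ (y ⊓ (z ⊔ x) ⊔ z ⊓ x)
          ≤ (x ⊔ y ⊓ z) ⊓ (y ⊔ z ⊓ x) :=
            inf_le_inf (sup_le (inf_le_left.trans le_sup_left) le_sup_right)
              (sup_le (inf_le_left.trans le_sup_left) le_sup_right)
      _ = x ⊓ y ⊔ y ⊓ z ⊔ z ⊓ x := med_inf' x y z
    · refine le_inf (sup_le (sup_le ?_ le_sup_right) ?_) (sup_le (sup_le ?_ ?_) le_sup_right)
      · exact ((inf_le_inf_left x le_sup_left).trans le_sup_left :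
          x ⊓ y ≤ x ⊓ (y ⊔ z) ⊔ y ⊓ z)
      · exact (le_inf inf_le_right (inf_le_left.trans le_sup_right)).trans le_sup_left
      · exact (le_inf inf_le_right (inf_le_left.trans le_sup_right)).trans le_sup_left
      · exact (inf_le_inf_left y le_sup_left).trans le_sup_left

lemma a_cyc (x y z : α) : (y ⊔ z) ⊓ (z ⊔ x) ⊓ (x ⊔ y) = (x ⊔ y) ⊓ (y ⊔ z) ⊓ (z ⊔ x) := by
  rw [inf_comm, ← inf_assoc]

lemma e_cyc (x y z : α) : y ⊓ z ⊔ z ⊓ x ⊔ x ⊓ y = x ⊓ y ⊔ y ⊓ z ⊔ z ⊓ x := by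
  rw [sup_comm, ← sup_assoc]

lemma distrib_of_no_M3
    (hM : ¬ ∃ e a b c d : α, b ≠ c ∧ b ≠ d ∧ c ≠ d ∧
      b ⊓ c = e ∧ b ⊓ d = e ∧ c ⊓ d = e ∧
      b ⊔ c = a ∧ b ⊔ d = a ∧ c ⊔ d = a) :
    ∀ x y z : α, x ⊓ (y ⊔ z) ≤ x ⊓ y ⊔ x ⊓ z := by
  intro x y z
  by_contra h
  set e : α := x ⊓ y ⊔ y ⊓ z ⊔ z ⊓ x with he
  set a : α := (x ⊔ y) ⊓ (y ⊔ z) ⊓ (z ⊔ x) with ha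
  have hea : e ≠ a := by
    intro heq
    apply h
    have h1 : x ⊓ (y ⊔ z) ≤ a :=
      le_inf (le_inf (inf_le_left.trans le_sup_left) inf_le_right)
        (inf_le_left.trans le_sup_right)
    have h2 : x ⊓ e ≤ x ⊓ y ⊔ x ⊓ z := by
      have : x ⊓ e = x ⊓ (x ⊓ y ⊔ y ⊓ z) ⊔ z ⊓ x := by
        rw [he, inf_sup_assoc_of_le _ (inf_le_right : z ⊓ x ≤ x)]
      rw [this]
      apply sup_le
      · rw [sup_comm (x ⊓ y), ← inf_sup_assoc_of_le _ (inf_le_left : x ⊓ y ≤ x)]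
        exact sup_le (le_sup_of_le_left (inf_le_inf_left x inf_le_left)) le_sup_left
      · exact le_sup_of_le_right (by rw [inf_comm])
    exact le_trans (le_inf inf_le_left (heq ▸ h1)) h2
  set x₁ : α := x ⊓ (y ⊔ z) ⊔ y ⊓ z with hx1
  set y₁ : α := y ⊓ (z ⊔ x) ⊔ z ⊓ x with hy1
  set z₁ : α := z ⊓ (x ⊔ y) ⊔ x ⊓ y with hz1
  obtain ⟨hxy_sup, hxy_inf⟩ := m3_pair x y z
  obtain ⟨hyz_sup, hyz_inf⟩ := m3_pair y z x
  obtain ⟨hzx_sup, hzx_inf⟩ := m3_pair z x y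
  rw [a_cyc] at hyz_sup
  rw [e_cyc] at hyz_inf
  rw [a_cyc y z x, a_cyc x y z] at hzx_sup
  rw [e_cyc y z x, e_cyc x y z] at hzx_inf
  -- hyz : y₁ ⊔ z₁ = a etc, hzx : z₁ ⊔ x₁ = a
  have hne : ∀ u v : α, u ⊓ v = e → u ⊔ v = a → u ≠ v := by
    intro u v h1 h2 huv
    exact hea (by rw [← h1, ← h2, huv, inf_idem, sup_idem])
  exact hM ⟨e, a, x₁, y₁, z₁, hne _ _ hxy_inf hxy_sup,
    hne _ _ (by rw [inf_comm]; exact hzx_inf) (by rw [sup_comm]; exact hzx_sup),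
    hne _ _ hyz_inf hyz_sup,
    hxy_inf, (by rw [inf_comm]; exact hzx_inf), hyz_inf,
    hxy_sup, (by rw [sup_comm]; exact hzx_sup), hyz_sup⟩

end ModularAux

lemma modular_of_no_N5 {L : Type*} [Lattice L]
    (hN : ¬ ∃ a b c d e : L, c < b ∧
      d ⊓ c = e ∧ d ⊓ b = e ∧ d ⊔ c = a ∧ d ⊔ b = a) :
    IsModularLattice L := by
  constructor
  intro x y z hxz
  by_contra hlt
  apply hN
  have hcb : x ⊔ y ⊓ z ≤ (x ⊔ y) ⊓ z :=
    le_inf (sup_le le_sup_left (inf_le_left.trans le_sup_right)) (sup_le hxz inf_le_right)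
  have hdb : y ⊓ ((x ⊔ y) ⊓ z) = y ⊓ z :=
    le_antisymm (le_inf inf_le_left (inf_le_right.trans inf_le_right))
      (le_inf inf_le_left (le_inf (inf_le_left.trans le_sup_right) inf_le_right))
  refine ⟨x ⊔ y, (x ⊔ y) ⊓ z, x ⊔ y ⊓ z, y, y ⊓ z, lt_of_le_not_ge hcb hlt, ?_, hdb, ?_, ?_⟩
  · exact le_antisymm ((inf_le_inf_left y hcb).trans hdb.le)
      (le_inf inf_le_left le_sup_right)
  · exact le_antisymm (sup_le le_sup_right (sup_le le_sup_left (inf_le_left.trans le_sup_right)))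
      (sup_le ((le_sup_left : x ≤ x ⊔ y ⊓ z).trans le_sup_right) le_sup_left)
  · exact le_antisymm (sup_le le_sup_right inf_le_left)
      (sup_le ((le_inf le_sup_left hxz).trans le_sup_right) le_sup_left)

section B3
variable {L : Type*} [DistribLattice L] [OrderBot L]

open Classical in
private noncomputable def tB3 (a b c : L) (i : Fin 3) (S : Set (Fin 3)) : L :=
  if i ∈ S then ![a, b, c] i else ⊥

private noncomputable def gB3 (a b c : L) (S : Set (Fin 3)) : L :=
  (a ⊓ b ⊔ (a ⊓ c ⊔ b ⊓ c)) ⊔ (tB3 a b c 0 S ⊔ (tB3 a b c 1 S ⊔ tB3 a b c 2 S))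

variable (a b c : L)

private lemma tB3_le (i : Fin 3) (S : Set (Fin 3)) : tB3 a b c i S ≤ ![a, b, c] i := by
  unfold tB3; split <;> simp

private lemma tB3_mem {i : Fin 3} {S : Set (Fin 3)} (h : i ∈ S) :
    tB3 a b c i S = ![a, b, c] i := by
  unfold tB3; simp [h]

private lemma tB3_not_mem {i : Fin 3} {S : Set (Fin 3)} (h : i ∉ S) :
    tB3 a b c i S = ⊥ := by
  unfold tB3; simp [h]

private lemma tB3_le_gB3 (i : Fin 3) (S : Set (Fin 3)) :
    tB3 a b c i S ≤ gB3 a b c S := by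
  fin_cases i
  · exact le_sup_of_le_right le_sup_left
  · exact le_sup_of_le_right (le_sup_of_le_right le_sup_left)
  · exact le_sup_of_le_right (le_sup_of_le_right le_sup_right)

private lemma vB3_inf_le_m (i j : Fin 3) (hij : i ≠ j) :
    ![a, b, c] i ⊓ ![a, b, c] j ≤ a ⊓ b ⊔ (a ⊓ c ⊔ b ⊓ c) := by
  fin_cases i <;> fin_cases j <;>
    first
    | exact absurd rfl hij
    | exact le_sup_left
    | exact le_sup_of_le_right le_sup_left
    | exact le_sup_of_le_right le_sup_right
    | exact (inf_comm _ _).trans_le le_sup_left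
    | exact (inf_comm _ _).trans_le (le_sup_of_le_right le_sup_left)
    | exact (inf_comm _ _).trans_le (le_sup_of_le_right le_sup_right)

private lemma gB3_mono {S T : Set (Fin 3)} (h : S ⊆ T) : gB3 a b c S ≤ gB3 a b c T := by
  have ht : ∀ i, tB3 a b c i S ≤ tB3 a b c i T := by
    intro i
    by_cases hi : i ∈ S
    · rw [tB3_mem a b c hi, tB3_mem a b c (h hi)]
    · rw [tB3_not_mem a b c hi]; exact bot_le
  exact sup_le_sup_left (sup_le_sup (ht 0) (sup_le_sup (ht 1) (ht 2))) _

private lemma gB3_sup (S T : Set (Fin 3)) :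
    gB3 a b c (S ∪ T) = gB3 a b c S ⊔ gB3 a b c T := by
  have ht : ∀ i, tB3 a b c i (S ∪ T) = tB3 a b c i S ⊔ tB3 a b c i T := by
    intro i
    by_cases h1 : i ∈ S <;> by_cases h2 : i ∈ T <;>
      simp [tB3, h1, h2]
  unfold gB3
  rw [ht 0, ht 1, ht 2]
  conv_rhs => rw [← sup_sup_distrib_left]
  congr 1
  ac_rfl

private lemma gB3_inf (S T : Set (Fin 3)) :
    gB3 a b c (S ∩ T) = gB3 a b c S ⊓ gB3 a b c T := by
  apply le_antisymm
  · exact le_inf (gB3_mono a b c Set.inter_subset_left)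
      (gB3_mono a b c Set.inter_subset_right)
  · have pair : ∀ i j, tB3 a b c i S ⊓ tB3 a b c j T ≤ gB3 a b c (S ∩ T) := by
      intro i j
      by_cases hij : i = j
      · subst hij
        by_cases h1 : i ∈ S
        · by_cases h2 : i ∈ T
          · calc tB3 a b c i S ⊓ tB3 a b c i T ≤ tB3 a b c i S := inf_le_left
              _ = ![a, b, c] i := tB3_mem a b c h1
              _ = tB3 a b c i (S ∩ T) := (tB3_mem a b c (Set.mem_inter h1 h2)).symm
              _ ≤ _ := tB3_le_gB3 a b c i _
          · rw [tB3_not_mem a b c h2]; simp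
        · rw [tB3_not_mem a b c h1]; simp
      · exact le_trans (inf_le_inf (tB3_le a b c i S) (tB3_le a b c j T))
          ((vB3_inf_le_m a b c i j hij).trans le_sup_left)
    have key : ∀ i, tB3 a b c i S ⊓ gB3 a b c T ≤ gB3 a b c (S ∩ T) := by
      intro i
      refine le_trans (le_of_eq (inf_sup_left (tB3 a b c i S) (a ⊓ b ⊔ (a ⊓ c ⊔ b ⊓ c))
        (tB3 a b c 0 T ⊔ (tB3 a b c 1 T ⊔ tB3 a b c 2 T))))
        (sup_le (inf_le_right.trans le_sup_left) ?_)
      refine le_trans (le_of_eq (inf_sup_left _ _ _)) (sup_le (pair i 0) ?_)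
      exact le_trans (le_of_eq (inf_sup_left _ _ _)) (sup_le (pair i 1) (pair i 2))
    refine le_trans (le_of_eq (inf_sup_right (a ⊓ b ⊔ (a ⊓ c ⊔ b ⊓ c))
      (tB3 a b c 0 S ⊔ (tB3 a b c 1 S ⊔ tB3 a b c 2 S)) (gB3 a b c T)))
      (sup_le (inf_le_left.trans le_sup_left) ?_)
    refine le_trans (le_of_eq (inf_sup_right _ _ _)) (sup_le (key 0) ?_)
    exact le_trans (le_of_eq (inf_sup_right _ _ _)) (sup_le (key 1) (key 2))

private lemma b3_embed {a b c : L}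
    (ha : SupPrime a) (hb : SupPrime b) (hc : SupPrime c)
    (hab : ¬a ≤ b) (hba : ¬b ≤ a) (hac : ¬a ≤ c) (hca : ¬c ≤ a)
    (hbc : ¬b ≤ c) (hcb : ¬c ≤ b) :
    ∃ g : Set (Fin 3) → L, Function.Injective g ∧
      (∀ x y, g (x ⊔ y) = g x ⊔ g y) ∧ (∀ x y, g (x ⊓ y) = g x ⊓ g y) := by
  have hout0 : ∀ S : Set (Fin 3), (0 : Fin 3) ∉ S → gB3 a b c S ≤ b ⊔ c := by
    intro S h
    unfold gB3
    rw [tB3_not_mem a b c h]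
    refine sup_le (sup_le (inf_le_right.trans le_sup_left)
      (sup_le (inf_le_right.trans le_sup_right) (inf_le_left.trans le_sup_left)))
      (sup_le bot_le (sup_le ((tB3_le a b c 1 S).trans ?_) ((tB3_le a b c 2 S).trans ?_)))
    · exact le_sup_left
    · exact le_sup_right
  have hout1 : ∀ S : Set (Fin 3), (1 : Fin 3) ∉ S → gB3 a b c S ≤ a ⊔ c := by
    intro S h
    unfold gB3
    rw [tB3_not_mem a b c h]
    refine sup_le (sup_le (inf_le_left.trans le_sup_left)
      (sup_le (inf_le_left.trans le_sup_left) (inf_le_right.trans le_sup_right)))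
      (sup_le ((tB3_le a b c 0 S).trans ?_) (sup_le bot_le ((tB3_le a b c 2 S).trans ?_)))
    · exact le_sup_left
    · exact le_sup_right
  have hout2 : ∀ S : Set (Fin 3), (2 : Fin 3) ∉ S → gB3 a b c S ≤ a ⊔ b := by
    intro S h
    unfold gB3
    rw [tB3_not_mem a b c h]
    refine sup_le (sup_le (inf_le_left.trans le_sup_left)
      (sup_le (inf_le_left.trans le_sup_left) (inf_le_left.trans le_sup_right)))
      (sup_le ((tB3_le a b c 0 S).trans ?_) (sup_le ((tB3_le a b c 1 S).trans ?_) bot_le))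
    · exact le_sup_left
    · exact le_sup_right
  have hmem : ∀ (i : Fin 3) (S : Set (Fin 3)), i ∈ S ↔ ![a, b, c] i ≤ gB3 a b c S := by
    intro i S
    constructor
    · intro h
      rw [← tB3_mem a b c h]
      exact tB3_le_gB3 a b c i S
    · intro h
      by_contra hns
      fin_cases i
      · rcases ha.le_sup.1 (h.trans (hout0 S hns)) with h' | h'
        · exact hab h'
        · exact hac h'
      · rcases hb.le_sup.1 (h.trans (hout1 S hns)) with h' | h'
        · exact hba h'
        · exact hbc h'
      · rcases hc.le_sup.1 (h.trans (hout2 S hns)) with h' | h'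
        · exact hca h'
        · exact hcb h'
  refine ⟨gB3 a b c, ?_, ?_, ?_⟩
  · intro S T hST
    ext i
    rw [hmem i S, hmem i T, hST]
  · intro S T
    exact gB3_sup a b c S T
  · intro S T
    exact gB3_inf a b c S T

end B3

section Dilworth
variable {P : Type*} [PartialOrder P]

private lemma two_chain_cover : ∀ s : Finset P,
    (∀ a ∈ s, ∀ b ∈ s, ∀ c ∈ s,
      ¬(¬a ≤ b ∧ ¬b ≤ a ∧ ¬a ≤ c ∧ ¬c ≤ a ∧ ¬b ≤ c ∧ ¬c ≤ b)) →
    ∃ C₁ C₂ : Finset P, (∀ x ∈ s, x ∈ C₁ ∨ x ∈ C₂) ∧ (∀ x ∈ C₁, x ∈ s) ∧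
      (∀ x ∈ C₂, x ∈ s) ∧ (∀ x ∈ C₁, ∀ y ∈ C₁, x ≤ y ∨ y ≤ x) ∧
      (∀ x ∈ C₂, ∀ y ∈ C₂, x ≤ y ∨ y ≤ x) := by
  classical
  intro s
  induction s using Finset.strongInduction with
  | _ s ih =>
    intro hw
    rcases s.eq_empty_or_nonempty with rfl | hne
    · exact ⟨∅, ∅, by simp, by simp, by simp, by simp, by simp⟩
    obtain ⟨a, has, hamax⟩ := Set.Finite.exists_maximalFor id (↑s : Set P)
      s.finite_toSet (by simpa using hne)
    rw [Finset.mem_coe] at has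
    obtain ⟨C₁, C₂, hcov, hC₁, hC₂, hch₁, hch₂⟩ :=
      ih (s.erase a) (Finset.erase_ssubset has)
        (fun x hx y hy z hz => hw x (Finset.mem_of_mem_erase hx) y
          (Finset.mem_of_mem_erase hy) z (Finset.mem_of_mem_erase hz))
    by_cases h2 : ∀ x ∈ s.erase a, ∀ y ∈ s.erase a, x ≤ y ∨ y ≤ x
    · refine ⟨s.erase a, {a}, ?_, fun x hx => Finset.mem_of_mem_erase hx, ?_, h2, ?_⟩
      · intro x hx
        by_cases hxa : x = a
        · exact Or.inr (by simp [hxa])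
        · exact Or.inl (Finset.mem_erase.2 ⟨hxa, hx⟩)
      · intro x hx
        rw [Finset.mem_singleton] at hx
        subst hx; exact has
      · intro x hx y hy
        rw [Finset.mem_singleton] at hx hy
        subst hx; subst hy; exact Or.inl le_rfl
    push_neg at h2
    obtain ⟨p, hp, q, hq, hpq, hqp⟩ := h2
    -- the symmetric main construction
    have main : ∀ C D : Finset P, (∀ x ∈ C, x ∈ s.erase a) → (∀ x ∈ D, x ∈ s.erase a) →
        (∀ x ∈ s.erase a, x ∈ C ∨ x ∈ D) → (∀ x ∈ C, ∀ y ∈ C, x ≤ y ∨ y ≤ x) →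
        (∀ x ∈ D, ∀ y ∈ D, x ≤ y ∨ y ≤ x) → ∀ b ∈ C, b ≤ a →
        (∀ x ∈ C, (∃ w ∈ s.erase a, ¬x ≤ w ∧ ¬w ≤ x) → x ≤ b) →
        ∃ C₁ C₂ : Finset P, (∀ x ∈ s, x ∈ C₁ ∨ x ∈ C₂) ∧ (∀ x ∈ C₁, x ∈ s) ∧
          (∀ x ∈ C₂, x ∈ s) ∧ (∀ x ∈ C₁, ∀ y ∈ C₁, x ≤ y ∨ y ≤ x) ∧
          (∀ x ∈ C₂, ∀ y ∈ C₂, x ≤ y ∨ y ≤ x) := by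
      intro C D hCe hDe hcov' hchC hchD b hbC hba hbmax
      refine ⟨insert a (C.filter (· ≤ b)), s \ insert a (C.filter (· ≤ b)), ?_, ?_, ?_, ?_, ?_⟩
      · intro x hx
        by_cases h : x ∈ insert a (C.filter (· ≤ b))
        · exact Or.inl h
        · exact Or.inr (Finset.mem_sdiff.2 ⟨hx, h⟩)
      · intro x hx
        rcases Finset.mem_insert.1 hx with rfl | hx
        · exact has
        · exact Finset.mem_of_mem_erase (hCe x (Finset.mem_of_mem_filter x hx))
      · exact fun x hx => (Finset.mem_sdiff.1 hx).1
      · intro x hx y hy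
        rcases Finset.mem_insert.1 hx with hxa | hx
        · rcases Finset.mem_insert.1 hy with hya | hy
          · exact Or.inl (le_of_eq (hxa.trans hya.symm))
          · exact Or.inr (((Finset.mem_filter.1 hy).2.trans hba).trans_eq hxa.symm)
        · rcases Finset.mem_insert.1 hy with hya | hy
          · exact Or.inl (((Finset.mem_filter.1 hx).2.trans hba).trans_eq hya.symm)
          · exact hchC x (Finset.mem_of_mem_filter x hx) y (Finset.mem_of_mem_filter y hy)
      · intro x hx y hy
        by_contra hcon
        rw [not_or] at hcon
        obtain ⟨hxy, hyx⟩ := hcon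
        obtain ⟨hxs, hxK⟩ := Finset.mem_sdiff.1 hx
        obtain ⟨hys, hyK⟩ := Finset.mem_sdiff.1 hy
        have hxa : x ≠ a := fun h => hxK (by rw [h]; exact Finset.mem_insert_self a _)
        have hya : y ≠ a := fun h => hyK (by rw [h]; exact Finset.mem_insert_self a _)
        have hxe : x ∈ s.erase a := Finset.mem_erase.2 ⟨hxa, hxs⟩
        have hye : y ∈ s.erase a := Finset.mem_erase.2 ⟨hya, hys⟩
        have hnb : ∀ z, z ∈ C → z ∉ insert a (C.filter (· ≤ b)) → ¬z ≤ b :=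
          fun z hzC hzK hzb => hzK (Finset.mem_insert_of_mem (Finset.mem_filter.2 ⟨hzC, hzb⟩))
        rcases hcov' x hxe with hxC | hxD <;> rcases hcov' y hye with hyC | hyD
        · rcases hchC x hxC y hyC with h | h
          · exact hxy h
          · exact hyx h
        · exact hnb x hxC hxK (hbmax x hxC ⟨y, hye, hxy, hyx⟩)
        · exact hnb y hyC hyK (hbmax y hyC ⟨x, hxe, hyx, hxy⟩)
        · rcases hchD x hxD y hyD with h | h
          · exact hxy h
          · exact hyx h
    -- maximal antichain witnesses
    set pred : P → Prop := fun x => ∃ w ∈ s.erase a, ¬x ≤ w ∧ ¬w ≤ x with hpred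
    set T₁ : Finset P := C₁.filter pred with hT₁
    set T₂ : Finset P := C₂.filter pred with hT₂
    have hT₁ne : T₁.Nonempty ∧ T₂.Nonempty := by
      rcases hcov p hp with hpC | hpC <;> rcases hcov q hq with hqC | hqC
      · rcases hch₁ p hpC q hqC with h | h
        · exact absurd h hpq
        · exact absurd h hqp
      · exact ⟨⟨p, Finset.mem_filter.2 ⟨hpC, q, hq, hpq, hqp⟩⟩,
          ⟨q, Finset.mem_filter.2 ⟨hqC, p, hp, hqp, hpq⟩⟩⟩
      · exact ⟨⟨q, Finset.mem_filter.2 ⟨hqC, p, hp, hqp, hpq⟩⟩,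
          ⟨p, Finset.mem_filter.2 ⟨hpC, q, hq, hpq, hqp⟩⟩⟩
      · rcases hch₂ p hpC q hqC with h | h
        · exact absurd h hpq
        · exact absurd h hqp
    obtain ⟨hT₁n, hT₂n⟩ := hT₁ne
    obtain ⟨a₁, ha₁T, ha₁max⟩ := Set.Finite.exists_maximalFor id (↑T₁ : Set P)
      T₁.finite_toSet (by simpa [Finset.coe_nonempty] using hT₁n)
    obtain ⟨a₂, ha₂T, ha₂max⟩ := Set.Finite.exists_maximalFor id (↑T₂ : Set P)
      T₂.finite_toSet (by simpa [Finset.coe_nonempty] using hT₂n)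
    rw [Finset.mem_coe] at ha₁T ha₂T
    have hg₁ : ∀ w ∈ T₁, w ≤ a₁ := by
      intro w hwT
      rcases hch₁ w (Finset.mem_of_mem_filter w hwT) a₁
        (Finset.mem_of_mem_filter a₁ ha₁T) with h | h
      · exact h
      · exact (ha₁max (Finset.mem_coe.2 hwT) h).ge
    have hg₂ : ∀ w ∈ T₂, w ≤ a₂ := by
      intro w hwT
      rcases hch₂ w (Finset.mem_of_mem_filter w hwT) a₂
        (Finset.mem_of_mem_filter a₂ ha₂T) with h | h
      · exact h
      · exact (ha₂max (Finset.mem_coe.2 hwT) h).ge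
    have ha₁e : a₁ ∈ s.erase a := hC₁ a₁ (Finset.mem_of_mem_filter a₁ ha₁T)
    have ha₂e : a₂ ∈ s.erase a := hC₂ a₂ (Finset.mem_of_mem_filter a₂ ha₂T)
    have h12 : ¬a₁ ≤ a₂ := by
      intro h12
      obtain ⟨-, w, hwe, hw1, hw2⟩ := Finset.mem_filter.1 ha₂T
      rcases hcov w hwe with hwC | hwC
      · exact hw2 ((hg₁ w (Finset.mem_filter.2 ⟨hwC, a₂, ha₂e, hw2, hw1⟩)).trans h12)
      · rcases hch₂ w hwC a₂ (Finset.mem_of_mem_filter a₂ ha₂T) with h | h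
        · exact hw2 h
        · exact hw1 h
    have h21 : ¬a₂ ≤ a₁ := by
      intro h21
      obtain ⟨-, w, hwe, hw1, hw2⟩ := Finset.mem_filter.1 ha₁T
      rcases hcov w hwe with hwC | hwC
      · rcases hch₁ w hwC a₁ (Finset.mem_of_mem_filter a₁ ha₁T) with h | h
        · exact hw2 h
        · exact hw1 h
      · exact hw2 ((hg₂ w (Finset.mem_filter.2 ⟨hwC, a₁, ha₁e, hw2, hw1⟩)).trans h21)
    have hcomp : (a ≤ a₁ ∨ a₁ ≤ a) ∨ (a ≤ a₂ ∨ a₂ ≤ a) := by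
      by_contra hcontra
      push_neg at hcontra
      obtain ⟨⟨hb1, hb2⟩, hb3, hb4⟩ := hcontra
      exact hw a₁ (Finset.mem_of_mem_erase ha₁e) a (has) a₂ (Finset.mem_of_mem_erase ha₂e)
        ⟨hb2, hb1, h12, h21, hb3, hb4⟩
    have hle : a₁ ≤ a ∨ a₂ ≤ a := by
      rcases hcomp with (h | h) | (h | h)
      · exact absurd (le_antisymm (hamax (Finset.mem_coe.2 (Finset.mem_of_mem_erase ha₁e)) h) h)
          (Finset.mem_erase.1 ha₁e).1
      · exact Or.inl h
      · exact absurd (le_antisymm (hamax (Finset.mem_coe.2 (Finset.mem_of_mem_erase ha₂e)) h) h)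
          (Finset.mem_erase.1 ha₂e).1
      · exact Or.inr h
    rcases hle with hle | hle
    · exact main C₁ C₂ hC₁ hC₂ hcov hch₁ hch₂ a₁ (Finset.mem_of_mem_filter a₁ ha₁T) hle
        (fun x hxC hx => hg₁ x (Finset.mem_filter.2 ⟨hxC, hx⟩))
    · exact main C₂ C₁ hC₂ hC₁ (fun x hx => (hcov x hx).symm) hch₂ hch₁ a₂
        (Finset.mem_of_mem_filter a₂ ha₂T) hle
        (fun x hxC hx => hg₂ x (Finset.mem_filter.2 ⟨hxC, hx⟩))

end Dilworth



/-- A finite lattice containing no pentagon `N₅`, no diamond `M₃` and no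
Boolean lattice `B₃` as a sublattice is distributive and embeds as a lattice
into `ℕ × ℕ` with the componentwise order. -/
theorem no_pentagon_diamond_boolean_implies_planar {L : Type*} [Lattice L]
    [Finite L]
    (hN : ¬ ∃ a b c d e : L, c < b ∧
      d ⊓ c = e ∧ d ⊓ b = e ∧ d ⊔ c = a ∧ d ⊔ b = a)
    (hM : ¬ ∃ e a b c d : L, b ≠ c ∧ b ≠ d ∧ c ≠ d ∧
      b ⊓ c = e ∧ b ⊓ d = e ∧ c ⊓ d = e ∧
      b ⊔ c = a ∧ b ⊔ d = a ∧ c ⊔ d = a)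
    (hB : ¬ ∃ g : Set (Fin 3) → L, Function.Injective g ∧
      (∀ x y, g (x ⊔ y) = g x ⊔ g y) ∧ (∀ x y, g (x ⊓ y) = g x ⊓ g y)) :
    (∀ x y z : L, x ⊓ (y ⊔ z) = (x ⊓ y) ⊔ (x ⊓ z)) ∧
      ∃ f : L → ℕ × ℕ, Function.Injective f ∧
        (∀ x y, f (x ⊔ y) = f x ⊔ f y) ∧ (∀ x y, f (x ⊓ y) = f x ⊓ f y) := by
  classical
  haveI : IsModularLattice L := modular_of_no_N5 hN
  have hd : ∀ x y z : L, x ⊓ (y ⊔ z) ≤ x ⊓ y ⊔ x ⊓ z := distrib_of_no_M3 hM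
  refine ⟨fun x y z => le_antisymm (hd x y z)
    (sup_le (inf_le_inf_left x le_sup_left) (inf_le_inf_left x le_sup_right)), ?_⟩
  cases isEmpty_or_nonempty L with
  | inl h =>
    exact ⟨fun _ => (0, 0), fun x => isEmptyElim x, fun x => isEmptyElim x,
      fun x => isEmptyElim x⟩
  | inr h =>
    letI : DistribLattice L := DistribLattice.ofInfSupLe hd
    letI : Fintype L := Fintype.ofFinite L
    letI : BoundedOrder L := Fintype.toBoundedOrder L
    set P := {p : L // SupIrred p} with hP
    have hwidth : ∀ a ∈ (Finset.univ : Finset P), ∀ b ∈ (Finset.univ : Finset P),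
        ∀ c ∈ (Finset.univ : Finset P),
        ¬(¬a ≤ b ∧ ¬b ≤ a ∧ ¬a ≤ c ∧ ¬c ≤ a ∧ ¬b ≤ c ∧ ¬c ≤ b) := by
      rintro a - b - c - ⟨h1, h2, h3, h4, h5, h6⟩
      rw [← Subtype.coe_le_coe] at h1 h2 h3 h4 h5 h6
      exact hB (b3_embed (supPrime_iff_supIrred.2 a.2) (supPrime_iff_supIrred.2 b.2)
        (supPrime_iff_supIrred.2 c.2) h1 h2 h3 h4 h5 h6)
    obtain ⟨C₁, C₂, hcov, hC₁, hC₂, hch₁, hch₂⟩ :=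
      two_chain_cover (Finset.univ : Finset P) hwidth
    have hcmp : ∀ (C : Finset P), (∀ u ∈ C, ∀ v ∈ C, u ≤ v ∨ v ≤ u) → ∀ x y : L,
        (C.filter fun p => p.1 ≤ x) ⊆ (C.filter fun p => p.1 ≤ y) ∨
        (C.filter fun p => p.1 ≤ y) ⊆ (C.filter fun p => p.1 ≤ x) := by
      intro C hch x y
      by_contra hc
      rw [not_or] at hc
      obtain ⟨h1, h2⟩ := hc
      obtain ⟨u, hu1, hu2⟩ := Finset.not_subset.1 h1
      obtain ⟨v, hv1, hv2⟩ := Finset.not_subset.1 h2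
      obtain ⟨huC, hux⟩ := Finset.mem_filter.1 hu1
      obtain ⟨hvC, hvy⟩ := Finset.mem_filter.1 hv1
      have hu2' : ¬ u.1 ≤ y := fun hh => hu2 (Finset.mem_filter.2 ⟨huC, hh⟩)
      have hv2' : ¬ v.1 ≤ x := fun hh => hv2 (Finset.mem_filter.2 ⟨hvC, hh⟩)
      rcases hch u huC v hvC with hh | hh
      · exact hu2' ((Subtype.coe_le_coe.2 hh).trans hvy)
      · exact hv2' ((Subtype.coe_le_coe.2 hh).trans hux)
    have hfs : ∀ (C : Finset P) (x y : L), (C.filter fun p => p.1 ≤ x ⊔ y) =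
        (C.filter fun p => p.1 ≤ x) ∪ (C.filter fun p => p.1 ≤ y) := by
      intro C x y
      ext p
      simp only [Finset.mem_filter, Finset.mem_union]
      constructor
      · rintro ⟨hpC, hp⟩
        rcases (supPrime_iff_supIrred.2 p.2).le_sup.1 hp with hh | hh
        · exact Or.inl ⟨hpC, hh⟩
        · exact Or.inr ⟨hpC, hh⟩
      · rintro (⟨hpC, hp⟩ | ⟨hpC, hp⟩)
        · exact ⟨hpC, hp.trans le_sup_left⟩
        · exact ⟨hpC, hp.trans le_sup_right⟩
    have hfi : ∀ (C : Finset P) (x y : L), (C.filter fun p => p.1 ≤ x ⊓ y) =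
        (C.filter fun p => p.1 ≤ x) ∩ (C.filter fun p => p.1 ≤ y) := by
      intro C x y
      ext p
      simp only [Finset.mem_filter, Finset.mem_inter, le_inf_iff]
      tauto
    have hcardu : ∀ (C : Finset P), (∀ u ∈ C, ∀ v ∈ C, u ≤ v ∨ v ≤ u) → ∀ x y : L,
        ((C.filter fun p => p.1 ≤ x) ∪ (C.filter fun p => p.1 ≤ y)).card =
        (C.filter fun p => p.1 ≤ x).card ⊔ (C.filter fun p => p.1 ≤ y).card := by
      intro C hch x y
      rcases hcmp C hch x y with hh | hh
      · rw [Finset.union_eq_right.2 hh, sup_eq_right.2 (Finset.card_le_card hh)]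
      · rw [Finset.union_eq_left.2 hh, sup_eq_left.2 (Finset.card_le_card hh)]
    have hcardi : ∀ (C : Finset P), (∀ u ∈ C, ∀ v ∈ C, u ≤ v ∨ v ≤ u) → ∀ x y : L,
        ((C.filter fun p => p.1 ≤ x) ∩ (C.filter fun p => p.1 ≤ y)).card =
        (C.filter fun p => p.1 ≤ x).card ⊓ (C.filter fun p => p.1 ≤ y).card := by
      intro C hch x y
      rcases hcmp C hch x y with hh | hh
      · rw [Finset.inter_eq_left.2 hh, inf_eq_left.2 (Finset.card_le_card hh)]
      · rw [Finset.inter_eq_right.2 hh, inf_eq_right.2 (Finset.card_le_card hh)]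
    refine ⟨fun x => ((C₁.filter fun p => p.1 ≤ x).card, (C₂.filter fun p => p.1 ≤ x).card),
      ?_, ?_, ?_⟩
    · intro x y hxy
      simp only [Prod.mk.injEq] at hxy
      obtain ⟨h1, h2⟩ := hxy
      have e1 : C₁.filter (fun p => p.1 ≤ x) = C₁.filter fun p => p.1 ≤ y := by
        rcases hcmp C₁ hch₁ x y with hh | hh
        · exact Finset.eq_of_subset_of_card_le hh (le_of_eq h1.symm)
        · exact (Finset.eq_of_subset_of_card_le hh (le_of_eq h1)).symm
      have e2 : C₂.filter (fun p => p.1 ≤ x) = C₂.filter fun p => p.1 ≤ y := by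
        rcases hcmp C₂ hch₂ x y with hh | hh
        · exact Finset.eq_of_subset_of_card_le hh (le_of_eq h2.symm)
        · exact (Finset.eq_of_subset_of_card_le hh (le_of_eq h2)).symm
      have hiff : ∀ p : P, (p.1 ≤ x ↔ p.1 ≤ y) := by
        intro p
        rcases hcov p (Finset.mem_univ p) with hp | hp
        · constructor
          · intro hh
            have h' : p ∈ C₁.filter fun p => p.1 ≤ x := Finset.mem_filter.2 ⟨hp, hh⟩
            rw [e1] at h'
            exact (Finset.mem_filter.1 h').2
          · intro hh
            have h' : p ∈ C₁.filter fun p => p.1 ≤ y := Finset.mem_filter.2 ⟨hp, hh⟩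
            rw [← e1] at h'
            exact (Finset.mem_filter.1 h').2
        · constructor
          · intro hh
            have h' : p ∈ C₂.filter fun p => p.1 ≤ x := Finset.mem_filter.2 ⟨hp, hh⟩
            rw [e2] at h'
            exact (Finset.mem_filter.1 h').2
          · intro hh
            have h' : p ∈ C₂.filter fun p => p.1 ≤ y := Finset.mem_filter.2 ⟨hp, hh⟩
            rw [← e2] at h'
            exact (Finset.mem_filter.1 h').2
      have key : ∀ u v : L, (∀ p : P, (p.1 ≤ u ↔ p.1 ≤ v)) → u ≤ v := by
        intro u v hpv
        obtain ⟨t, ht, hirr⟩ := exists_supIrred_decomposition u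
        rw [← ht]
        refine Finset.sup_le fun b hb => ?_
        have hbu : b ≤ u := ht ▸ Finset.le_sup (f := id) hb
        exact (hpv ⟨b, hirr hb⟩).1 hbu
      exact le_antisymm (key x y hiff) (key y x fun p => (hiff p).symm)
    · intro x y
      dsimp only
      rw [hfs C₁, hfs C₂, hcardu C₁ hch₁, hcardu C₂ hch₂, Prod.mk_sup_mk]
    · intro x y
      dsimp only
      rw [hfi C₁, hfi C₂, hcardi C₁ hch₁, hcardi C₂ hch₂, Prod.mk_inf_mk]
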